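/- Let m₁ ≥ m₂ ≥ 0 be real numbers and let p, q be real numbers with 0 ≤ p ≤ q ≤ 1 and p·q < 1. Then m₁ + (m₂ + q·m₁)/(1 − p·q) ≥ m₂ + (m₁ + p·m₂)/(1 − p·q). (Interpretation: for the general two-unit cold standby system, if E[X₁] ≥ E[X₂] and P(X₂ > Y₁) ≥ P(X₁ > Y₂), then E[τ₀^C] ≥ E[τ₃^C].) -/

import Mathlib

theorem cold_allocation_mean (m₁ m₂ p q : ℝ)
    (hm : m₁ ≥ m₂) (hm₂ : m₂ ≥ 0)
    (hp : 0 ≤ p) (hpq : p ≤ q) (hq : q ≤ 1) (hpq1 : p * q < 1) :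
    m₁ + (m₂ + q * m₁) / (1 - p * q) ≥ m₂ + (m₁ + p * m₂) / (1 - p * q) := by
  have h : 0 < 1 - p * q := by linarith
  rw [ge_iff_le, ← sub_nonneg]
  have heq : m₁ + (m₂ + q * m₁) / (1 - p * q) - (m₂ + (m₁ + p * m₂) / (1 - p * q))
      = (m₁ * q * (1 - p) - m₂ * p * (1 - q)) / (1 - p * q) := by
    have hne : 1 - p * q ≠ 0 := h.ne'
    rw [eq_div_iff hne, sub_mul, add_mul, add_mul, div_mul_cancel₀ _ hne, div_mul_cancel₀ _ hne]
    ring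
  rw [heq]
  apply div_nonneg _ h.le
  nlinarith [mul_le_mul hpq hm hm₂ (hp.trans hpq), mul_nonneg hp hm₂]
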